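/- Let n ≥ 2, q ∈ [0,1], and let P_q be the top-or-bottom-to-random transition matrix on S_n. Define f : S_n → ℝ by f(σ) = Σ_{i ∈ Des(σ)} C(n−2, i−1)·q^{i−1}·(1−q)^{n−1−i}. Then for every integer t ≥ 0, the entry of the vector P_q^t · f at the identity permutation equals (1 − ((n−2)/n)^t)·(1/2). (In words: starting from an ascendingly ordered deck, the expected value of the weighted descent statistic f after t top-or-bottom-to-random shuffles is (1 − ((n−2)/n)^t)/2.) -/

import Mathlib

open Finset

/-- 0-indexed descent set of a deck arrangement: `i ∈ desSet n σ` iff the card at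
position `i` is greater than the card at position `i+1` (positions `0, …, n-2`). -/
def desSet (n : ℕ) (σ : Equiv.Perm (Fin n)) : Finset ℕ :=
  (Finset.range (n - 1)).filter
    (fun i => ∃ h : i + 1 < n, σ ⟨i + 1, h⟩ < σ ⟨i, Nat.lt_of_succ_lt h⟩)

/-- `des σ` is the number of descents of `σ`. -/
def des (n : ℕ) (σ : Equiv.Perm (Fin n)) : ℕ := (desSet n σ).card

/-- the cycle `e_i` (0-indexed): sends `j ↦ j-1` for `j > i`, `i ↦ n-1`, fixes `j < i`.
(`Fin.cycleRange i` is the cycle `c_i` (0-indexed): sends `j ↦ j+1` for `j < i`,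
`i ↦ 0`, fixes `j > i`.) -/
def botCycle (n : ℕ) (i : Fin n) : Equiv.Perm (Fin n) :=
  Fin.revPerm * Fin.cycleRange i.rev * Fin.revPerm

/-- top-or-bottom-to-random transition matrix with parameter `q`:
with probability `q` remove the top card and reinsert it at a uniform position,
otherwise do the same with the bottom card. -/
noncomputable def Pq (n : ℕ) (q : ℝ) : Matrix (Equiv.Perm (Fin n)) (Equiv.Perm (Fin n)) ℝ :=
  fun σ τ =>
    q / n * ((Finset.univ.filter (fun i : Fin n => τ = σ * Fin.cycleRange i)).card : ℝ) +
    (1 - q) / n * ((Finset.univ.filter (fun i : Fin n => τ = σ * botCycle n i)).card : ℝ)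

/-- weighted descent statistic `f(σ) = Σ_{j ∈ Des(σ)} C(n-2,j) q^j (1-q)^{n-2-j}`
(0-indexed version of `Σ_{i ∈ Des(σ)} C(n-2,i-1) q^{i-1} (1-q)^{n-1-i}`). -/
noncomputable def fdes (n : ℕ) (q : ℝ) (σ : Equiv.Perm (Fin n)) : ℝ :=
  ∑ j ∈ desSet n σ, ((n - 2).choose j : ℝ) * q ^ j * (1 - q) ^ (n - 2 - j)

section Aux

lemma mem_desSet {n : ℕ} {σ : Equiv.Perm (Fin n)} {j : ℕ} (hj : j + 1 < n) :
    j ∈ desSet n σ ↔ σ ⟨j + 1, hj⟩ < σ ⟨j, Nat.lt_of_succ_lt hj⟩ := by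
  simp only [desSet, Finset.mem_filter, Finset.mem_range]
  constructor
  · rintro ⟨-, h, hlt⟩; exact hlt
  · intro h; exact ⟨by omega, hj, h⟩

lemma not_mem_desSet_of_ge {n : ℕ} {σ : Equiv.Perm (Fin n)} {j : ℕ} (hj : n - 1 ≤ j) :
    j ∉ desSet n σ := by
  simp only [desSet, Finset.mem_filter, Finset.mem_range]
  rintro ⟨h, -⟩; omega

lemma cycleRange_mk_lt {m : ℕ} {i p : ℕ} (hi : i < m + 2) (hp : p < i) :
    Fin.cycleRange (⟨i, hi⟩ : Fin (m + 2)) ⟨p, by omega⟩ = ⟨p + 1, by omega⟩ := by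
  have h := Fin.cycleRange_of_lt (n := m + 2) (j := ⟨i, hi⟩) (i := ⟨p, by omega⟩) (by
    simp [Fin.lt_def, hp])
  rw [h]
  ext
  simp [Fin.val_add_one, Fin.ext_iff]
  omega

lemma cycleRange_mk_self {m : ℕ} {i : ℕ} (hi : i < m + 2) :
    Fin.cycleRange (⟨i, hi⟩ : Fin (m + 2)) ⟨i, hi⟩ = ⟨0, by omega⟩ := by
  have h := Fin.cycleRange_self (n := m + 2) (⟨i, hi⟩ : Fin (m+2))
  rw [h]; rfl

lemma cycleRange_mk_gt {m : ℕ} {i p : ℕ} (hp : p < m + 2) (hip : i < p) :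
    Fin.cycleRange (⟨i, by omega⟩ : Fin (m + 2)) ⟨p, hp⟩ = ⟨p, hp⟩ :=
  Fin.cycleRange_of_gt (n := m + 2) (by simp [Fin.lt_def, hip])

lemma rev_mk {m : ℕ} {p : ℕ} (hp : p < m + 2) :
    Fin.rev (⟨p, hp⟩ : Fin (m + 2)) = ⟨m + 1 - p, by omega⟩ := by
  ext; simp only [Fin.val_rev, Fin.val_mk]; omega

lemma botCycle_eq {m : ℕ} (i x : Fin (m + 2)) :
    botCycle (m + 2) i x = Fin.rev (Fin.cycleRange i.rev (Fin.rev x)) := rfl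

lemma botCycle_mk_lt {m : ℕ} {i p : ℕ} (hi : i < m + 2) (hp : p < i) :
    botCycle (m + 2) (⟨i, hi⟩ : Fin (m + 2)) ⟨p, by omega⟩ = ⟨p, by omega⟩ := by
  rw [botCycle_eq, rev_mk hi, rev_mk (show p < m + 2 by omega),
    cycleRange_mk_gt (show m + 1 - p < m + 2 by omega) (show m + 1 - i < m + 1 - p by omega),
    rev_mk]
  all_goals (ext; simp only [Fin.val_mk]; omega)

lemma botCycle_mk_self {m : ℕ} {i : ℕ} (hi : i < m + 2) :
    botCycle (m + 2) (⟨i, hi⟩ : Fin (m + 2)) ⟨i, hi⟩ = ⟨m + 1, by omega⟩ := by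
  rw [botCycle_eq, rev_mk hi, cycleRange_mk_self (show m + 1 - i < m + 2 by omega),
    rev_mk (show 0 < m + 2 by omega)]
  ext; simp

lemma botCycle_mk_gt {m : ℕ} {i p : ℕ} (hp : p < m + 2) (hip : i < p) :
    botCycle (m + 2) (⟨i, by omega⟩ : Fin (m + 2)) ⟨p, hp⟩ = ⟨p - 1, by omega⟩ := by
  rw [botCycle_eq, rev_mk (show i < m + 2 by omega), rev_mk hp,
    cycleRange_mk_lt (show m + 1 - i < m + 2 by omega) (show m + 1 - p < m + 1 - i by omega),
    rev_mk]
  all_goals (ext; simp only [Fin.val_mk]; omega)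

/-- real indicator of a descent at position `j`. -/
noncomputable def ind {n : ℕ} (σ : Equiv.Perm (Fin n)) (j : ℕ) : ℝ :=
  if j ∈ desSet n σ then 1 else 0

lemma ind_eq {n : ℕ} (σ : Equiv.Perm (Fin n)) {j : ℕ} (hj : j + 1 < n) :
    ind σ j = if σ ⟨j + 1, hj⟩ < σ ⟨j, Nat.lt_of_succ_lt hj⟩ then 1 else 0 := by
  unfold ind
  by_cases h : σ ⟨j + 1, hj⟩ < σ ⟨j, Nat.lt_of_succ_lt hj⟩
  · rw [if_pos h, if_pos ((mem_desSet hj).2 h)]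
  · rw [if_neg h, if_neg (fun hm => h ((mem_desSet hj).1 hm))]

lemma ind_zero_of_ge {n : ℕ} (σ : Equiv.Perm (Fin n)) {j : ℕ} (hj : n - 1 ≤ j) :
    ind σ j = 0 := by
  unfold ind
  rw [if_neg (not_mem_desSet_of_ge hj)]

lemma fdes_eq_sum_ind {n : ℕ} (q : ℝ) (σ : Equiv.Perm (Fin n)) :
    fdes n q σ = ∑ j ∈ Finset.range (n - 1),
      ((n - 2).choose j : ℝ) * q ^ j * (1 - q) ^ (n - 2 - j) * ind σ j := by
  rw [fdes, desSet, Finset.sum_filter]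
  refine Finset.sum_congr rfl fun j hj => ?_
  have hh : j + 1 < n := by have := Finset.mem_range.1 hj; omega
  by_cases h : ∃ hh : j + 1 < n, σ ⟨j + 1, hh⟩ < σ ⟨j, Nat.lt_of_succ_lt hh⟩
  · obtain ⟨hh', hlt⟩ := h
    rw [if_pos ⟨hh', hlt⟩, ind, if_pos ((mem_desSet hh').2 hlt), mul_one]
  · rw [if_neg h, ind, if_neg (fun hm => h ⟨hh, (mem_desSet hh).1 hm⟩), mul_zero]

lemma sum_four (j : ℕ) (a b c d : ℝ) :
    ∀ N, j + 2 ≤ N → ∑ i ∈ Finset.range N,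
      (if i < j then a else if i = j then b else if i = j + 1 then c else d) =
      j * a + b + c + ((N - (j + 2) : ℕ) : ℝ) * d := by
  intro N
  induction N with
  | zero => omega
  | succ N ih =>
    intro hN
    rcases Nat.lt_or_ge N (j + 2) with h | h
    · have hN2 : N = j + 1 := by omega
      subst hN2
      rw [Finset.sum_range_succ, Finset.sum_range_succ]
      rw [if_neg (show ¬ j + 1 < j by omega), if_neg (show ¬ j + 1 = j by omega),
        if_pos (rfl : j + 1 = j + 1), if_neg (show ¬ j < j by omega),
        if_pos (rfl : j = j)]
      have h1 : ∑ i ∈ Finset.range j,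
          (if i < j then a else if i = j then b else if i = j + 1 then c else d)
          = ∑ _i ∈ Finset.range j, a :=
        Finset.sum_congr rfl fun i hi => if_pos (Finset.mem_range.1 hi)
      rw [h1, Finset.sum_const, Finset.card_range,
        show j + 1 + 1 - (j + 2) = 0 by omega]
      push_cast
      ring
    · rw [Finset.sum_range_succ, ih h,
        if_neg (by omega), if_neg (by omega), if_neg (by omega),
        show N + 1 - (j + 2) = (N - (j + 2)) + 1 by omega]
      push_cast
      ring

end Aux

section Count

variable {m : ℕ} (σ : Equiv.Perm (Fin (m + 2)))

lemma countTop {j : ℕ} (hj : j ≤ m) :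
    ∑ i : Fin (m + 2), ind (σ * Fin.cycleRange i) j =
      (j : ℝ) * ind σ j + 1 + ((m - j : ℕ) : ℝ) * ind σ (j + 1) := by
  have hj2 : j + 1 < m + 2 := by omega
  set b : ℝ := if σ ⟨j + 1, hj2⟩ < σ ⟨0, by omega⟩ then 1 else 0 with hb
  set c : ℝ := if σ ⟨0, by omega⟩ < σ ⟨j + 1, hj2⟩ then 1 else 0 with hc
  set G : ℕ → ℝ := fun i =>
    if i < j then ind σ j else if i = j then b else if i = j + 1 then c
      else ind σ (j + 1) with hG
  have hpt : ∀ i : Fin (m + 2), ind (σ * Fin.cycleRange i) j = G ↑i := by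
    rintro ⟨iv, hi⟩
    rcases Nat.lt_or_ge iv j with h1 | h1
    · rw [ind_eq _ hj2]
      simp only [Equiv.Perm.mul_apply]
      simp only [cycleRange_mk_gt hj2 (show iv < j + 1 by omega),
        cycleRange_mk_gt (show j < m + 2 by omega) h1]
      have hGv : G iv = ind σ j := by simp [hG, h1]
      rw [hGv, ind_eq σ hj2]
    · rcases Nat.eq_or_lt_of_le h1 with h2 | h2
      · -- iv = j
        subst h2
        rw [ind_eq _ hj2]
        simp only [Equiv.Perm.mul_apply]
        simp only [cycleRange_mk_gt hj2 (show j < j + 1 by omega), cycleRange_mk_self hi]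
        have hGv : G j = b := by simp [hG]
        rw [hGv, hb]
      · rcases Nat.eq_or_lt_of_le h2 with h3 | h3
        · -- iv = j + 1
          rw [ind_eq _ hj2]
          simp only [Equiv.Perm.mul_apply]
          have hiv : iv = j + 1 := h3.symm
          subst hiv
          simp only [cycleRange_mk_self hi, cycleRange_mk_lt hi (show j < j + 1 by omega)]
          have hGv : G (j + 1) = c := by
            simp [hG, show ¬ (j + 1 < j) from by omega, show ¬ (j + 1 = j) from by omega]
          rw [hGv, hc]
        · -- iv ≥ j + 2
          have hj3 : j + 1 + 1 < m + 2 := by omega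
          rw [ind_eq _ hj2]
          simp only [Equiv.Perm.mul_apply]
          simp only [cycleRange_mk_lt hi (show j + 1 < iv by omega),
            cycleRange_mk_lt hi (show j < iv by omega)]
          have hGv : G iv = ind σ (j + 1) := by
            simp [hG, show ¬ (iv < j) from by omega, show ¬ (iv = j) from by omega,
              show ¬ (iv = j + 1) from by omega]
          rw [hGv, ind_eq σ hj3]
  calc ∑ i : Fin (m + 2), ind (σ * Fin.cycleRange i) j
      = ∑ i : Fin (m + 2), G ↑i := Finset.sum_congr rfl fun i _ => hpt i
    _ = ∑ i ∈ Finset.range (m + 2), G i := Fin.sum_univ_eq_sum_range G (m + 2)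
    _ = (j : ℝ) * ind σ j + b + c + ((m + 2 - (j + 2) : ℕ) : ℝ) * ind σ (j + 1) :=
        sum_four j _ b c _ (m + 2) (by omega)
    _ = (j : ℝ) * ind σ j + 1 + ((m - j : ℕ) : ℝ) * ind σ (j + 1) := by
        have hne : σ ⟨j + 1, hj2⟩ ≠ σ ⟨0, by omega⟩ := by
          intro hcon
          have := σ.injective hcon
          simp only [Fin.mk.injEq] at this
          omega
        have hbc : b + c = 1 := by
          rcases hne.lt_or_gt with h | h
          · rw [hb, hc, if_pos h, if_neg (asymm h)]; norm_num
          · rw [hb, hc, if_neg (asymm h), if_pos h]; norm_num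
        rw [show m + 2 - (j + 2) = m - j by omega]
        rw [add_assoc ((j:ℝ) * ind σ j) b c, hbc]

lemma countBot {j : ℕ} (hj : j ≤ m) :
    ∑ i : Fin (m + 2), ind (σ * botCycle (m + 2) i) j =
      (j : ℝ) * ind σ (j - 1) + 1 + ((m - j : ℕ) : ℝ) * ind σ j := by
  have hj2 : j + 1 < m + 2 := by omega
  set b : ℝ := if σ ⟨j, by omega⟩ < σ ⟨m + 1, by omega⟩ then 1 else 0 with hb
  set c : ℝ := if σ ⟨m + 1, by omega⟩ < σ ⟨j, by omega⟩ then 1 else 0 with hc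
  set G : ℕ → ℝ := fun i =>
    if i < j then ind σ (j - 1) else if i = j then b else if i = j + 1 then c
      else ind σ j with hG
  have hpt : ∀ i : Fin (m + 2), ind (σ * botCycle (m + 2) i) j = G ↑i := by
    rintro ⟨iv, hi⟩
    rcases Nat.lt_or_ge iv j with h1 | h1
    · -- iv < j, so j ≥ 1
      have hj1 : j - 1 + 1 < m + 2 := by omega
      rw [ind_eq _ hj2]
      simp only [Equiv.Perm.mul_apply]
      simp only [botCycle_mk_gt hj2 (show iv < j + 1 by omega),
        botCycle_mk_gt (show j < m + 2 by omega) h1]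
      have hGv : G iv = ind σ (j - 1) := by simp [hG, h1]
      rw [hGv, ind_eq σ hj1]
      have hmk : (⟨j + 1 - 1, by omega⟩ : Fin (m + 2)) = ⟨j - 1 + 1, by omega⟩ := by
        ext; simp only [Fin.val_mk]; omega
      simp only [hmk]
    · rcases Nat.eq_or_lt_of_le h1 with h2 | h2
      · -- iv = j
        subst h2
        rw [ind_eq _ hj2]
        simp only [Equiv.Perm.mul_apply]
        simp only [botCycle_mk_gt hj2 (show j < j + 1 by omega), botCycle_mk_self hi]
        have hGv : G j = b := by simp [hG]
        rw [hGv, hb]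
        have hmk : (⟨j + 1 - 1, by omega⟩ : Fin (m + 2)) = ⟨j, by omega⟩ := by
          ext; simp only [Fin.val_mk]; omega
        simp only [hmk]
      · rcases Nat.eq_or_lt_of_le h2 with h3 | h3
        · -- iv = j + 1
          rw [ind_eq _ hj2]
          simp only [Equiv.Perm.mul_apply]
          have hiv : iv = j + 1 := h3.symm
          subst hiv
          simp only [botCycle_mk_self hi, botCycle_mk_lt hi (show j < j + 1 by omega)]
          have hGv : G (j + 1) = c := by
            simp [hG, show ¬ (j + 1 < j) from by omega, show ¬ (j + 1 = j) from by omega]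
          rw [hGv, hc]
        · -- iv ≥ j + 2
          rw [ind_eq _ hj2]
          simp only [Equiv.Perm.mul_apply]
          simp only [botCycle_mk_lt hi (show j + 1 < iv by omega),
            botCycle_mk_lt hi (show j < iv by omega)]
          have hGv : G iv = ind σ j := by
            simp [hG, show ¬ (iv < j) from by omega, show ¬ (iv = j) from by omega,
              show ¬ (iv = j + 1) from by omega]
          rw [hGv, ind_eq σ hj2]
  calc ∑ i : Fin (m + 2), ind (σ * botCycle (m + 2) i) j
      = ∑ i : Fin (m + 2), G ↑i := Finset.sum_congr rfl fun i _ => hpt i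
    _ = ∑ i ∈ Finset.range (m + 2), G i := Fin.sum_univ_eq_sum_range G (m + 2)
    _ = (j : ℝ) * ind σ (j - 1) + b + c + ((m + 2 - (j + 2) : ℕ) : ℝ) * ind σ j :=
        sum_four j _ b c _ (m + 2) (by omega)
    _ = (j : ℝ) * ind σ (j - 1) + 1 + ((m - j : ℕ) : ℝ) * ind σ j := by
        have hne : σ ⟨j, by omega⟩ ≠ σ ⟨m + 1, by omega⟩ := by
          intro hcon
          have := σ.injective hcon
          simp only [Fin.mk.injEq] at this
          omega
        have hbc : b + c = 1 := by
          rcases hne.lt_or_gt with h | h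
          · rw [hb, hc, if_pos h, if_neg (asymm h)]; norm_num
          · rw [hb, hc, if_neg (asymm h), if_pos h]; norm_num
        rw [show m + 2 - (j + 2) = m - j by omega]
        rw [add_assoc ((j:ℝ) * ind σ (j - 1)) b c, hbc]

end Count

section Key

/-- binomial weight -/
noncomputable def wfn (m : ℕ) (q : ℝ) (j : ℕ) : ℝ :=
  (m.choose j : ℝ) * q ^ j * (1 - q) ^ (m - j)

variable {m : ℕ} (q : ℝ)

lemma fdes_eq' (σ : Equiv.Perm (Fin (m + 2))) :
    fdes (m + 2) q σ = ∑ j ∈ Finset.range (m + 1), wfn m q j * ind σ j := by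
  have h := fdes_eq_sum_ind q σ
  rw [h, show m + 2 - 1 = m + 1 from rfl, show m + 2 - 2 = m from rfl]
  exact Finset.sum_congr rfl fun j _ => by rw [wfn]

lemma wsum : ∑ j ∈ Finset.range (m + 1), wfn m q j = 1 := by
  have h := add_pow q (1 - q) m
  rw [show q + (1 - q) = 1 by ring, one_pow] at h
  have h2 : ∑ j ∈ Finset.range (m + 1), wfn m q j
      = ∑ j ∈ Finset.range (m + 1), q ^ j * (1 - q) ^ (m - j) * (m.choose j : ℝ) :=
    Finset.sum_congr rfl fun j _ => by rw [wfn]; ring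
  rw [h2, ← h]

lemma wtop : wfn m q (m + 1) = 0 := by
  simp [wfn, Nat.choose_eq_zero_of_lt (show m < m + 1 by omega)]

lemma wstep (j : ℕ) :
    q * ((m - j : ℕ) : ℝ) * wfn m q j = (1 - q) * ((j : ℝ) + 1) * wfn m q (j + 1) := by
  rw [wfn, wfn]
  rcases Nat.lt_or_ge j m with h | h
  · have hc : (m.choose (j + 1) * (j + 1) : ℕ) = m.choose j * (m - j) :=
      Nat.choose_succ_right_eq m j
    have hcast : (m.choose (j + 1) : ℝ) * ((j : ℝ) + 1) = (m.choose j : ℝ) * ((m - j : ℕ) : ℝ) := by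
      exact_mod_cast congrArg (fun x : ℕ => (x : ℝ)) hc
    have hpow : (1 - q) ^ (m - j) = (1 - q) ^ (m - (j + 1)) * (1 - q) := by
      rw [← pow_succ]; congr 1; omega
    rw [hpow]
    linear_combination (-((1 - q) * q ^ (j + 1) * (1 - q) ^ (m - (j + 1)))) * hcast
  · have h0 : m - j = 0 := by omega
    have h2 : m.choose (j + 1) = 0 := Nat.choose_eq_zero_of_lt (by omega)
    rw [h0, h2]
    push_cast
    ring

lemma key (σ : Equiv.Perm (Fin (m + 2))) :
    q * ∑ i : Fin (m + 2), fdes (m + 2) q (σ * Fin.cycleRange i)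
      + (1 - q) * ∑ i : Fin (m + 2), fdes (m + 2) q (σ * botCycle (m + 2) i)
      = m * fdes (m + 2) q σ + 1 := by
  set S1 : ℝ := ∑ j ∈ Finset.range (m + 1), wfn m q j * ((j : ℝ) * ind σ j) with hS1
  set C0 : ℝ := ∑ j ∈ Finset.range (m + 1), wfn m q j * (((m - j : ℕ) : ℝ) * ind σ (j + 1)) with hC0
  set D1 : ℝ := ∑ j ∈ Finset.range (m + 1), wfn m q j * ((j : ℝ) * ind σ (j - 1)) with hD1
  set F0 : ℝ := ∑ j ∈ Finset.range (m + 1), wfn m q j * (((m - j : ℕ) : ℝ) * ind σ j) with hF0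
  have hsplit : ∀ u v : ℕ → ℝ,
      ∑ j ∈ Finset.range (m + 1), wfn m q j * (u j + 1 + v j)
        = (∑ j ∈ Finset.range (m + 1), wfn m q j * u j) + 1
          + ∑ j ∈ Finset.range (m + 1), wfn m q j * v j := by
    intro u v
    have h1 : ∑ j ∈ Finset.range (m + 1), wfn m q j * (u j + 1 + v j)
        = (∑ j ∈ Finset.range (m + 1), wfn m q j * u j)
          + (∑ j ∈ Finset.range (m + 1), wfn m q j)
          + ∑ j ∈ Finset.range (m + 1), wfn m q j * v j := by
      rw [← Finset.sum_add_distrib, ← Finset.sum_add_distrib]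
      exact Finset.sum_congr rfl fun j _ => by ring
    rw [h1, wsum]
  have htop : ∑ i : Fin (m + 2), fdes (m + 2) q (σ * Fin.cycleRange i) = S1 + 1 + C0 := by
    calc ∑ i : Fin (m + 2), fdes (m + 2) q (σ * Fin.cycleRange i)
        = ∑ i : Fin (m + 2), ∑ j ∈ Finset.range (m + 1), wfn m q j * ind (σ * Fin.cycleRange i) j :=
          Finset.sum_congr rfl fun i _ => fdes_eq' q (σ * Fin.cycleRange i)
      _ = ∑ j ∈ Finset.range (m + 1), wfn m q j * ∑ i : Fin (m + 2), ind (σ * Fin.cycleRange i) j := by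
          rw [Finset.sum_comm]
          exact Finset.sum_congr rfl fun j _ => (Finset.mul_sum _ _ _).symm
      _ = ∑ j ∈ Finset.range (m + 1),
            wfn m q j * ((j : ℝ) * ind σ j + 1 + ((m - j : ℕ) : ℝ) * ind σ (j + 1)) := by
          refine Finset.sum_congr rfl fun j hj => ?_
          rw [countTop σ (by have := Finset.mem_range.1 hj; omega : j ≤ m)]
      _ = S1 + 1 + C0 := hsplit _ _
  have hbot : ∑ i : Fin (m + 2), fdes (m + 2) q (σ * botCycle (m + 2) i) = D1 + 1 + F0 := by
    calc ∑ i : Fin (m + 2), fdes (m + 2) q (σ * botCycle (m + 2) i)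
        = ∑ i : Fin (m + 2), ∑ j ∈ Finset.range (m + 1), wfn m q j * ind (σ * botCycle (m + 2) i) j :=
          Finset.sum_congr rfl fun i _ => fdes_eq' q (σ * botCycle (m + 2) i)
      _ = ∑ j ∈ Finset.range (m + 1), wfn m q j * ∑ i : Fin (m + 2), ind (σ * botCycle (m + 2) i) j := by
          rw [Finset.sum_comm]
          exact Finset.sum_congr rfl fun j _ => (Finset.mul_sum _ _ _).symm
      _ = ∑ j ∈ Finset.range (m + 1),
            wfn m q j * ((j : ℝ) * ind σ (j - 1) + 1 + ((m - j : ℕ) : ℝ) * ind σ j) := by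
          refine Finset.sum_congr rfl fun j hj => ?_
          rw [countBot σ (by have := Finset.mem_range.1 hj; omega : j ≤ m)]
      _ = D1 + 1 + F0 := hsplit _ _
  have e1 : q * C0 = (1 - q) * S1 := by
    set g : ℕ → ℝ := fun k => (1 - q) * ((k : ℝ) * wfn m q k * ind σ k) with hg
    have hga := Finset.sum_range_succ' g (m + 1)
    have hgb := Finset.sum_range_succ g (m + 1)
    have hg0 : g 0 = 0 := by simp [hg]
    have hgm : g (m + 1) = 0 := by simp [hg, wtop]
    have hC : q * C0 = ∑ j ∈ Finset.range (m + 1), g (j + 1) := by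
      rw [hC0, Finset.mul_sum]
      refine Finset.sum_congr rfl fun j _ => ?_
      rw [hg]
      have h := wstep (m := m) q j
      push_cast
      linear_combination (ind σ (j + 1)) * h
    have hS : (1 - q) * S1 = ∑ j ∈ Finset.range (m + 1), g j := by
      rw [hS1, Finset.mul_sum]
      exact Finset.sum_congr rfl fun j _ => by rw [hg]; try ring
    rw [hC, hS]
    linarith [hga, hgb, hg0, hgm]
  have e2 : (1 - q) * D1 = q * F0 := by
    set h : ℕ → ℝ := fun j => (1 - q) * (wfn m q j * ((j : ℝ) * ind σ (j - 1))) with hh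
    have hha := Finset.sum_range_succ' h m
    have hh0 : h 0 = 0 := by simp [hh]
    have hD : (1 - q) * D1 = ∑ j ∈ Finset.range (m + 1), h j := by
      rw [hD1, Finset.mul_sum]
    have hstep : ∀ j, h (j + 1) = q * (wfn m q j * (((m - j : ℕ) : ℝ) * ind σ j)) := by
      intro j
      rw [hh]
      simp only [Nat.add_sub_cancel]
      have hws := wstep (m := m) q j
      push_cast
      linear_combination (-(ind σ j)) * hws
    have hF : q * F0 = (∑ j ∈ Finset.range m, h (j + 1))
        + q * (wfn m q m * (((m - m : ℕ) : ℝ) * ind σ m)) := by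
      rw [hF0, Finset.mul_sum, Finset.sum_range_succ]
      congr 1
      exact Finset.sum_congr rfl fun j _ => (hstep j).symm
    rw [hD, hF]
    have hz : q * (wfn m q m * (((m - m : ℕ) : ℝ) * ind σ m)) = 0 := by
      simp [Nat.sub_self]
    rw [hz, add_zero, hha, hh0, add_zero]
  have e5 : S1 + F0 = m * (∑ j ∈ Finset.range (m + 1), wfn m q j * ind σ j) := by
    rw [hS1, hF0, Finset.mul_sum, ← Finset.sum_add_distrib]
    refine Finset.sum_congr rfl fun j hj => ?_
    have hjm : j ≤ m := by have := Finset.mem_range.1 hj; omega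
    have hc : ((m - j : ℕ) : ℝ) = (m : ℝ) - j := by
      push_cast [Nat.cast_sub hjm]; ring
    rw [hc]; ring
  rw [htop, hbot, fdes_eq' q σ]
  linear_combination e1 + e2 + e5

end Key

section Final

lemma aux_sum {n : ℕ} (σ : Equiv.Perm (Fin n)) (cfun : Fin n → Equiv.Perm (Fin n))
    (g : Equiv.Perm (Fin n) → ℝ) :
    ∑ τ : Equiv.Perm (Fin n),
        ((Finset.univ.filter (fun i : Fin n => τ = σ * cfun i)).card : ℝ) * g τ
      = ∑ i : Fin n, g (σ * cfun i) := by
  have hcard : ∀ τ : Equiv.Perm (Fin n),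
      ((Finset.univ.filter (fun i : Fin n => τ = σ * cfun i)).card : ℝ)
        = ∑ i : Fin n, (if τ = σ * cfun i then (1 : ℝ) else 0) := by
    intro τ
    rw [Finset.card_filter]
    push_cast
    exact Finset.sum_congr rfl fun i _ => by split <;> simp
  simp only [hcard, Finset.sum_mul, ite_mul, one_mul, zero_mul]
  rw [Finset.sum_comm]
  refine Finset.sum_congr rfl fun i _ => ?_
  rw [Finset.sum_ite_eq' Finset.univ (σ * cfun i) g]
  simp

lemma Pq_mulVec {m : ℕ} (q : ℝ) (v : Equiv.Perm (Fin (m + 2)) → ℝ) (σ : Equiv.Perm (Fin (m + 2))) :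
    (Pq (m + 2) q).mulVec v σ
      = q / ((m : ℝ) + 2) * ∑ i : Fin (m + 2), v (σ * Fin.cycleRange i)
        + (1 - q) / ((m : ℝ) + 2) * ∑ i : Fin (m + 2), v (σ * botCycle (m + 2) i) := by
  simp only [Matrix.mulVec, dotProduct, Pq]
  rw [← aux_sum σ (fun i => Fin.cycleRange i) v, ← aux_sum σ (fun i => botCycle (m + 2) i) v]
  rw [Finset.mul_sum, Finset.mul_sum, ← Finset.sum_add_distrib]
  refine Finset.sum_congr rfl fun τ _ => ?_
  push_cast
  ring

lemma desSet_one (n : ℕ) : desSet n (1 : Equiv.Perm (Fin n)) = ∅ := by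
  ext j
  simp only [desSet, Finset.mem_filter, Finset.mem_range, Finset.notMem_empty, iff_false]
  rintro ⟨h1, h2, h3⟩
  simp only [Equiv.Perm.coe_one, id_eq, Fin.lt_def] at h3
  omega

lemma fdes_one (n : ℕ) (q : ℝ) : fdes n q (1 : Equiv.Perm (Fin n)) = 0 := by
  rw [fdes, desSet_one, Finset.sum_empty]

lemma iterate {m : ℕ} (q : ℝ) (t : ℕ) :
    ∀ σ : Equiv.Perm (Fin (m + 2)),
      ((Pq (m + 2) q) ^ t).mulVec (fdes (m + 2) q) σ
        = ((m : ℝ) / ((m : ℝ) + 2)) ^ t * fdes (m + 2) q σ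
          + (1 - ((m : ℝ) / ((m : ℝ) + 2)) ^ t) / 2 := by
  induction t with
  | zero =>
    intro σ
    simp [Matrix.one_mulVec]
  | succ t ih =>
    intro σ
    set r : ℝ := (m : ℝ) / ((m : ℝ) + 2) with hr
    have hN : ((m : ℝ) + 2) ≠ 0 := by positivity
    have h1 : ((Pq (m + 2) q) ^ (t + 1)).mulVec (fdes (m + 2) q) σ
        = (Pq (m + 2) q).mulVec (((Pq (m + 2) q) ^ t).mulVec (fdes (m + 2) q)) σ := by
      rw [Matrix.mulVec_mulVec, ← pow_succ']
    rw [h1, Pq_mulVec]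
    have htop : ∑ i : Fin (m + 2), ((Pq (m + 2) q) ^ t).mulVec (fdes (m + 2) q) (σ * Fin.cycleRange i)
        = r ^ t * (∑ i : Fin (m + 2), fdes (m + 2) q (σ * Fin.cycleRange i))
          + ((m : ℝ) + 2) * ((1 - r ^ t) / 2) := by
      have hcardsum : ∑ _i : Fin (m + 2), ((1 - r ^ t) / 2)
          = ((m : ℝ) + 2) * ((1 - r ^ t) / 2) := by
        rw [Finset.sum_const, Finset.card_univ, Fintype.card_fin, nsmul_eq_mul]
        push_cast
        ring
      rw [Finset.mul_sum, ← hcardsum, ← Finset.sum_add_distrib]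
      exact Finset.sum_congr rfl fun i _ => ih (σ * Fin.cycleRange i)
    have hbot : ∑ i : Fin (m + 2), ((Pq (m + 2) q) ^ t).mulVec (fdes (m + 2) q) (σ * botCycle (m + 2) i)
        = r ^ t * (∑ i : Fin (m + 2), fdes (m + 2) q (σ * botCycle (m + 2) i))
          + ((m : ℝ) + 2) * ((1 - r ^ t) / 2) := by
      have hcardsum : ∑ _i : Fin (m + 2), ((1 - r ^ t) / 2)
          = ((m : ℝ) + 2) * ((1 - r ^ t) / 2) := by
        rw [Finset.sum_const, Finset.card_univ, Fintype.card_fin, nsmul_eq_mul]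
        push_cast
        ring
      rw [Finset.mul_sum, ← hcardsum, ← Finset.sum_add_distrib]
      exact Finset.sum_congr rfl fun i _ => ih (σ * botCycle (m + 2) i)
    have hkey := key q σ
    set Stop := ∑ i : Fin (m + 2), fdes (m + 2) q (σ * Fin.cycleRange i) with hStop
    set Sbot := ∑ i : Fin (m + 2), fdes (m + 2) q (σ * botCycle (m + 2) i) with hSbot
    rw [htop, hbot]
    have hexp : q / ((m : ℝ) + 2) * (r ^ t * Stop + ((m : ℝ) + 2) * ((1 - r ^ t) / 2))
          + (1 - q) / ((m : ℝ) + 2) * (r ^ t * Sbot + ((m : ℝ) + 2) * ((1 - r ^ t) / 2))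
        = (r ^ t / ((m : ℝ) + 2)) * (q * Stop + (1 - q) * Sbot) + (1 - r ^ t) / 2 := by
      field_simp
      ring
    rw [hexp, hkey, pow_succ]
    simp only [hr]
    field_simp
    ring
  
end Final

/-- Starting from the ascending deck, the expected value of the weighted descent
statistic after `t` top-or-bottom-to-random shuffles is `(1 - ((n-2)/n)^t)/2`. -/
theorem stmt11 (n : ℕ) (hn : 2 ≤ n) (q : ℝ) (hq : q ∈ Set.Icc (0 : ℝ) 1) (t : ℕ) :
    ((Pq n q) ^ t).mulVec (fdes n q) 1 = (1 - (((n : ℝ) - 2) / n) ^ t) * (1 / 2) := by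
  obtain ⟨m, rfl⟩ : ∃ m, n = m + 2 := ⟨n - 2, by omega⟩
  rw [iterate q t 1, fdes_one]
  push_cast
  ring
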